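/- Let τ and α be real numbers with 0 < τ < π, 0 < τ − α/2 < π, and 0 < τ + α/2 < π, and for real ℏ near 0 define W(τ, α, ℏ) = √( sin(τ + α/2 + ℏ/2)·sin(τ − α/2 + ℏ/2) / (sin(τ)·sin(τ + ℏ)) ). Then lim_{ℏ→0} (W(τ, α, ℏ) − W(τ + ℏ/2, α, 0))/ℏ = 0; equivalently, W(τ, α, ℏ) = W(τ + ℏ/2, α, 0) + o(ℏ). -/

import Mathlib

open Real Filter

/-- The function `W(τ, α, ℏ)` appearing in the ψ-symbol of the curve `Dₑ` when
the edge `e` joins a trivalent vertex to itself. -/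
noncomputable def W9 (τ α h : ℝ) : ℝ :=
  Real.sqrt (Real.sin (τ + α / 2 + h / 2) * Real.sin (τ - α / 2 + h / 2)
    / (Real.sin τ * Real.sin (τ + h)))

/-- `W(τ, α, ℏ) = W(τ + ℏ/2, α, 0) + o(ℏ)`, i.e.
`(W(τ, α, ℏ) − W(τ + ℏ/2, α, 0))/ℏ → 0` as `ℏ → 0`. -/
theorem W_shift_asymptotic (τ α : ℝ)
    (h1 : 0 < τ) (h2 : τ < Real.pi)
    (h3 : 0 < τ - α / 2) (h4 : τ - α / 2 < Real.pi)
    (h5 : 0 < τ + α / 2) (h6 : τ + α / 2 < Real.pi) :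
    Tendsto (fun h : ℝ => (W9 τ α h - W9 (τ + h / 2) α 0) / h)
      (nhdsWithin 0 {0}ᶜ) (nhds 0) := by
  set a := τ + α / 2 with ha_def
  set b := τ - α / 2 with hb_def
  have hs : 0 < Real.sin τ := Real.sin_pos_of_pos_of_lt_pi h1 h2
  have hsa : 0 < Real.sin a := Real.sin_pos_of_pos_of_lt_pi h5 h6
  have hsb : 0 < Real.sin b := Real.sin_pos_of_pos_of_lt_pi h3 h4
  set m := Real.sin a * Real.sin b with hm_def
  set s := Real.sin τ with hs_def
  set k := Real.sin τ * Real.cos τ with hk_def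
  have hm : 0 < m := mul_pos hsa hsb
  have hq : 0 < m / (s * s) := div_pos hm (mul_pos hs hs)
  -- derivative of numerator
  have hid : HasDerivAt (fun h : ℝ => h / 2) (1 / 2 : ℝ) 0 := (hasDerivAt_id 0).div_const 2
  have hnum : HasDerivAt (fun h : ℝ => Real.sin (a + h / 2) * Real.sin (b + h / 2)) k 0 := by
    have h1' : HasDerivAt (fun h : ℝ => Real.sin (a + h / 2))
        (Real.cos (a + 0 / 2) * (1 / 2)) 0 := (hid.const_add a).sin
    have h2' : HasDerivAt (fun h : ℝ => Real.sin (b + h / 2))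
        (Real.cos (b + 0 / 2) * (1 / 2)) 0 := (hid.const_add b).sin
    have := h1'.mul h2'
    refine this.congr_deriv ?_; symm
    have hab : a + b = 2 * τ := by rw [ha_def, hb_def]; ring
    have h3' : Real.sin (a + b) = Real.sin a * Real.cos b + Real.cos a * Real.sin b :=
      Real.sin_add a b
    rw [hab, Real.sin_two_mul] at h3'
    simp only [zero_div, add_zero]
    rw [hk_def]
    nlinarith [h3']
  -- derivative of first denominator
  have hden1 : HasDerivAt (fun h : ℝ => Real.sin τ * Real.sin (τ + h)) k 0 := by
    have h1' : HasDerivAt (fun h : ℝ => Real.sin (τ + h)) (Real.cos (τ + 0) * 1) 0 :=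
      ((hasDerivAt_id 0).const_add τ).sin
    have := h1'.const_mul (Real.sin τ)
    refine this.congr_deriv ?_; symm
    simp [hk_def]
  -- derivative of second denominator
  have hden2 : HasDerivAt (fun h : ℝ => Real.sin (τ + h / 2) * Real.sin (τ + h / 2)) k 0 := by
    have h1' : HasDerivAt (fun h : ℝ => Real.sin (τ + h / 2))
        (Real.cos (τ + 0 / 2) * (1 / 2)) 0 := (hid.const_add τ).sin
    have := h1'.mul h1'
    refine this.congr_deriv ?_; symm
    simp only [zero_div, add_zero]
    rw [hk_def]; ring
  have hden1v : Real.sin τ * Real.sin (τ + (0:ℝ)) = s * s := by simp [hs_def]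
  have hden2v : Real.sin (τ + (0:ℝ) / 2) * Real.sin (τ + (0:ℝ) / 2) = s * s := by simp [hs_def]
  have hnumv : Real.sin (a + (0:ℝ) / 2) * Real.sin (b + (0:ℝ) / 2) = m := by simp [hm_def]
  have hss : s * s ≠ 0 := by positivity
  -- quotients
  set c : ℝ := ((k * (s * s) - m * k) / (s * s) ^ 2) / (2 * Real.sqrt (m / (s * s))) with hc_def
  have hQ1 : HasDerivAt (fun h : ℝ =>
      Real.sin (a + h / 2) * Real.sin (b + h / 2) / (Real.sin τ * Real.sin (τ + h)))
      ((k * (s * s) - m * k) / (s * s) ^ 2) 0 := by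
    have := hnum.div hden1 (by rw [hden1v]; exact hss)
    rw [hnumv, hden1v] at this
    exact this
  have hQ2 : HasDerivAt (fun h : ℝ =>
      Real.sin (a + h / 2) * Real.sin (b + h / 2)
        / (Real.sin (τ + h / 2) * Real.sin (τ + h / 2)))
      ((k * (s * s) - m * k) / (s * s) ^ 2) 0 := by
    have := hnum.div hden2 (by rw [hden2v]; exact hss)
    rw [hnumv, hden2v] at this
    exact this
  have hQ1v : Real.sin (a + (0:ℝ) / 2) * Real.sin (b + (0:ℝ) / 2)
      / (Real.sin τ * Real.sin (τ + (0:ℝ))) = m / (s * s) := by rw [hnumv, hden1v]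
  have hQ2v : Real.sin (a + (0:ℝ) / 2) * Real.sin (b + (0:ℝ) / 2)
      / (Real.sin (τ + (0:ℝ) / 2) * Real.sin (τ + (0:ℝ) / 2)) = m / (s * s) := by
    rw [hnumv, hden2v]
  have H1 : HasDerivAt (fun h : ℝ => W9 τ α h) c 0 := by
    have := hQ1.sqrt (by rw [hQ1v]; exact ne_of_gt hq)
    rw [hQ1v] at this
    convert this using 2 with h
    rfl
  have H2 : HasDerivAt (fun h : ℝ => W9 (τ + h / 2) α 0) c 0 := by
    have := hQ2.sqrt (by rw [hQ2v]; exact ne_of_gt hq)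
    rw [hQ2v] at this
    convert this using 2 with h
    simp only [W9]
    congr 1
    rw [ha_def, hb_def]
    ring_nf
  have HF : HasDerivAt (fun h : ℝ => W9 τ α h - W9 (τ + h / 2) α 0) 0 0 := by
    have := H1.sub H2; rw [sub_self] at this; exact this
  have := hasDerivAt_iff_tendsto_slope.mp HF
  have hF0 : W9 τ α 0 - W9 (τ + 0 / 2) α 0 = 0 := by norm_num
  refine this.congr fun h => ?_
  simp [slope_def_field, hF0]
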